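/- Let H be an inner product space over ℝ or ℂ, let B be a nonempty finite index set, and for each β ∈ B let D_β : H → H be a symmetric linear operator (⟪D_β u, v⟫ = ⟪u, D_β v⟫ for all u, v ∈ H). Assume: (a) each D_β is injective; and (b) for all β ≠ β' and all u ∈ H, the anticommutator is nonnegative: ⟪(D_β ∘ D_{β'} + D_{β'} ∘ D_β) u, u⟫ ≥ 0 (this inner product is automatically real). Then for every family (t_β)_{β∈B} of nonnegative real numbers with t_{β₀} > 0 for at least one β₀, the operator Σ_β t_β D_β is injective. -/

import Mathlib

/-- A strongly acyclic system is acyclic: if the `D β` are symmetric injective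
operators with nonnegative pairwise anticommutators, then any nonnegative linear
combination with at least one positive coefficient is injective. -/
theorem injective_nonneg_combination_of_stronglyAcyclic
    {𝕜 H B : Type*} [RCLike 𝕜] [NormedAddCommGroup H] [InnerProductSpace 𝕜 H]
    [Fintype B] [Nonempty B]
    (D : B → H →ₗ[𝕜] H)
    (hsymm : ∀ β, (D β).IsSymmetric)
    (hinj : ∀ β, Function.Injective (D β))
    (hanti : ∀ β β', β ≠ β' → ∀ u : H,
      0 ≤ RCLike.re (inner 𝕜 ((D β) ((D β') u) + (D β') ((D β) u)) u : 𝕜))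
    (t : B → ℝ) (ht : ∀ β, 0 ≤ t β) (ht0 : ∃ β₀, 0 < t β₀) :
    Function.Injective ⇑(∑ β, (t β : 𝕜) • D β) := by
  obtain ⟨β₀, hβ₀⟩ := ht0
  rw [injective_iff_map_eq_zero]
  intro u hu
  apply hinj β₀
  rw [map_zero]
  -- key nonnegativity of cross terms
  have key : ∀ β, 0 ≤ RCLike.re (inner 𝕜 ((D β) u) ((D β₀) u) : 𝕜) := by
    intro β
    rcases eq_or_ne β β₀ with rfl | hβ
    · rw [inner_self_eq_norm_sq (𝕜 := 𝕜)]
      positivity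
    · have h := hanti β β₀ hβ u
      rw [inner_add_left, map_add] at h
      have h1 : (inner 𝕜 ((D β) ((D β₀) u)) u : 𝕜) = inner 𝕜 ((D β₀) u) ((D β) u) :=
        hsymm β _ _
      have h2 : (inner 𝕜 ((D β₀) ((D β) u)) u : 𝕜) = inner 𝕜 ((D β) u) ((D β₀) u) :=
        hsymm β₀ _ _
      rw [h1, h2, inner_re_symm] at h
      linarith
  have expand : RCLike.re (inner 𝕜 ((∑ β, (t β : 𝕜) • D β) u) ((D β₀) u) : 𝕜)
      = ∑ β, t β * RCLike.re (inner 𝕜 ((D β) u) ((D β₀) u) : 𝕜) := by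
    rw [LinearMap.sum_apply, sum_inner, map_sum]
    refine Finset.sum_congr rfl fun β _ => ?_
    rw [LinearMap.smul_apply, inner_smul_left, RCLike.conj_ofReal, RCLike.re_ofReal_mul]
  rw [hu, inner_zero_left, map_zero] at expand
  have hle : t β₀ * RCLike.re (inner 𝕜 ((D β₀) u) ((D β₀) u) : 𝕜)
      ≤ ∑ β, t β * RCLike.re (inner 𝕜 ((D β) u) ((D β₀) u) : 𝕜) :=
    Finset.single_le_sum (fun β _ => mul_nonneg (ht β) (key β)) (Finset.mem_univ β₀)
  rw [← expand, inner_self_eq_norm_sq (𝕜 := 𝕜)] at hle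
  have : ‖(D β₀) u‖ ^ 2 ≤ 0 := by
    have := mul_nonneg hβ₀.le (sq_nonneg ‖(D β₀) u‖)
    nlinarith
  have hn : ‖(D β₀) u‖ = 0 := by nlinarith [norm_nonneg ((D β₀) u)]
  exact norm_eq_zero.mp hn
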